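/- Let J = [1, q] ⊆ [n] be an interval containing 1 and 2 but not n, and define a directed graph on subsets of J with edges of type (M1) (there exists j with j ∈ N, j+1 ∈ M, M∖{j+1} = N∖{j}) and type (M4) (1, 2 ∈ M and N = M ∖ {1, 2}). Then for M = {m_1 < ⋯ < m_r} and N = {n_1 < ⋯ < n_s}, there is a directed path from M to N if and only if r − s is a nonnegative even integer and m_{r−ν} ≥ n_{s−ν} for all 0 ≤ ν ≤ s−1. Moreover, there is a directed path using only edges of type (M1) if and only if r = s and m_ν ≥ n_ν for all ν ∈ [r]. -/

import Mathlib

/-! ### Auxiliary counting machinery -/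

/-- number of elements of `S` that are `≥ t`. -/
def cnt (t : ℕ) (S : Finset ℕ) : ℕ := (S.filter (fun x => t ≤ x)).card

lemma cnt_mono {t t' : ℕ} (h : t ≤ t') (S : Finset ℕ) : cnt t' S ≤ cnt t S := by
  apply Finset.card_le_card
  intro x hx
  simp only [Finset.mem_filter] at *
  exact ⟨hx.1, le_trans h hx.2⟩

lemma cnt_le_card (t : ℕ) (S : Finset ℕ) : cnt t S ≤ S.card :=
  Finset.card_le_card (Finset.filter_subset _ _)

lemma cnt_succ (t : ℕ) (S : Finset ℕ) :
    cnt t S = cnt (t+1) S + (if t ∈ S then 1 else 0) := by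
  classical
  unfold cnt
  have h : S.filter (fun x => t ≤ x)
      = S.filter (fun x => t+1 ≤ x) ∪ S.filter (fun x => x = t) := by
    ext x
    simp only [Finset.mem_filter, Finset.mem_union]
    by_cases hx : x ∈ S
    · simp [hx]; omega
    · simp [hx]
  rw [h, Finset.card_union_of_disjoint]
  · congr 1
    rw [Finset.filter_eq']
    split <;> simp [*]
  · rw [Finset.disjoint_left]
    intro x hx1 hx2
    simp only [Finset.mem_filter] at hx1 hx2
    omega

lemma one_le_cnt {a t : ℕ} {S : Finset ℕ} (ha : a ∈ S) (h : t ≤ a) : 1 ≤ cnt t S := by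
  have : a ∈ S.filter (fun x => t ≤ x) := Finset.mem_filter.2 ⟨ha, h⟩
  exact Finset.card_pos.2 ⟨a, this⟩

lemma cnt_zero (S : Finset ℕ) : cnt 0 S = S.card := by
  unfold cnt; rw [Finset.filter_true_of_mem]; intro x _; omega

lemma cnt_eq_card_of_forall {t : ℕ} {S : Finset ℕ} (h : ∀ x ∈ S, t ≤ x) :
    cnt t S = S.card := by
  unfold cnt; rw [Finset.filter_true_of_mem h]

lemma cnt_insert {b t : ℕ} {S : Finset ℕ} (hb : b ∉ S) :
    cnt t (insert b S) = cnt t S + (if t ≤ b then 1 else 0) := by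
  unfold cnt
  rw [Finset.filter_insert]
  split
  · rw [Finset.card_insert_of_notMem (fun h => hb (Finset.mem_of_mem_filter _ h))]
  · simp

lemma cnt_erase {a t : ℕ} {S : Finset ℕ} (ha : a ∈ S) :
    cnt t (S.erase a) = cnt t S - (if t ≤ a then 1 else 0) := by
  unfold cnt
  rw [Finset.filter_erase]
  by_cases h : t ≤ a
  · rw [Finset.card_erase_of_mem (Finset.mem_filter.2 ⟨ha, h⟩)]
    simp [h]
  · rw [Finset.erase_eq_of_notMem (fun hx => h (Finset.mem_filter.1 hx).2)]
    simp [h]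

lemma mem_iff_cnt {x : ℕ} {S : Finset ℕ} : x ∈ S ↔ cnt (x+1) S < cnt x S := by
  have := cnt_succ x S
  by_cases hx : x ∈ S <;> simp [hx] at this ⊢ <;> omega

lemma cnt_eq_zero_of_subset {t q : ℕ} {S : Finset ℕ} (hS : S ⊆ Finset.Icc 1 q)
    (ht : q < t) : cnt t S = 0 := by
  unfold cnt
  rw [Finset.card_eq_zero, Finset.filter_eq_empty_iff]
  intro x hx
  have := Finset.mem_Icc.1 (hS hx)
  omega

lemma cnt_one_of_subset {q : ℕ} {S : Finset ℕ} (hS : S ⊆ Finset.Icc 1 q) :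
    cnt 1 S = S.card := by
  have h : cnt 0 S = cnt 1 S + (if 0 ∈ S then 1 else 0) := cnt_succ 0 S
  have h0 : 0 ∉ S := by
    intro h0
    have := Finset.mem_Icc.1 (hS h0)
    omega
  rw [if_neg h0, cnt_zero] at h
  omega

/-! ### Bridging sorted-list indices and counts -/

lemma sorted_getD_le_iff : ∀ (l : List ℕ), l.Pairwise (· ≤ ·) → ∀ k, k < l.length → ∀ v : ℕ,
    (v ≤ l.getD k 0 ↔ l.length - k ≤ l.countP (fun x => decide (v ≤ x)))
  | [], _, k, hk, v => by simp at hk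
  | a :: t, hs, k, hk, v => by
    rw [List.pairwise_cons] at hs
    obtain ⟨ha, hst⟩ := hs
    cases k with
    | zero =>
      rw [List.getD_cons_zero]
      constructor
      · intro hva
        have hall : ∀ x ∈ a :: t, (fun x => decide (v ≤ x)) x = true := by
          intro x hx
          simp only [decide_eq_true_eq]
          rcases List.mem_cons.1 hx with h | h
          · omega
          · exact le_trans hva (ha x h)
        rw [List.countP_eq_length.2 hall]
        omega
      · intro h
        have hle := List.countP_le_length (p := fun x => decide (v ≤ x)) (l := a :: t)
        have heq : (a :: t).countP (fun x => decide (v ≤ x)) = (a :: t).length := by omega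
        have := List.countP_eq_length.1 heq a (List.mem_cons_self (a := a) (l := t))
        simpa using this
    | succ k =>
      have hk' : k < t.length := by simpa using hk
      rw [List.getD_cons_succ]
      by_cases hva : v ≤ a
      · apply iff_of_true
        · have hmem : t.getD k 0 ∈ t := by
            rw [List.getD_eq_getElem t 0 hk']
            exact List.getElem_mem hk'
          exact le_trans hva (ha _ hmem)
        · have hcount : t.countP (fun x => decide (v ≤ x)) = t.length := by
            apply List.countP_eq_length.2
            intro x hx
            simp only [decide_eq_true_eq]
            exact le_trans hva (ha x hx)
          rw [List.countP_cons]
          simp only [List.length_cons, hcount, decide_eq_true_eq]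
          split <;> omega
      · rw [List.countP_cons]
        simp only [decide_eq_true_eq, if_neg hva, add_zero, List.length_cons]
        have := sorted_getD_le_iff t hst k hk' v
        rw [this]
        omega

lemma cnt_eq_countP (v : ℕ) (S : Finset ℕ) :
    cnt v S = (S.sort (· ≤ ·)).countP (fun x => decide (v ≤ x)) := by
  have hperm : (S.sort (· ≤ ·)).Perm S.toList := Finset.sort_perm_toList S _
  rw [hperm.countP_eq]
  have h1 : S.toList.countP (fun x => decide (v ≤ x))
      = Multiset.countP (fun x => v ≤ x) (S.1) := by
    conv_rhs => rw [← Multiset.coe_toList S.1]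
    rw [Multiset.coe_countP]
    rfl
  rw [h1, Multiset.countP_eq_card_filter]
  rfl

lemma finset_getD_le_iff (S : Finset ℕ) {k : ℕ} (hk : k < S.card) (v : ℕ) :
    v ≤ (S.sort (· ≤ ·)).getD k 0 ↔ S.card - k ≤ cnt v S := by
  have h := sorted_getD_le_iff (S.sort (· ≤ ·)) (Finset.pairwise_sort _ _) k
    (by rwa [Finset.length_sort]) v
  rw [Finset.length_sort] at h
  rw [h, cnt_eq_countP]

lemma dom_iff {M N : Finset ℕ} (hle : N.card ≤ M.card) :
    (∀ t, cnt t N ≤ cnt t M) ↔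
      (∀ ν < N.card, (N.sort (· ≤ ·)).getD (N.card - 1 - ν) 0 ≤
        (M.sort (· ≤ ·)).getD (M.card - 1 - ν) 0) := by
  constructor
  · intro hdom ν hν
    set v := (N.sort (· ≤ ·)).getD (N.card - 1 - ν) 0 with hv
    have h1 : N.card - (N.card - 1 - ν) ≤ cnt v N :=
      (finset_getD_le_iff N (by omega) v).1 le_rfl
    have h2 : ν + 1 ≤ cnt v N := by omega
    have h3 : ν + 1 ≤ cnt v M := le_trans h2 (hdom v)
    exact (finset_getD_le_iff M (by omega) v).2 (by omega)
  · intro h t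
    rcases Nat.eq_zero_or_pos (cnt t N) with hc | hc
    · omega
    have hcN : cnt t N ≤ N.card := cnt_le_card t N
    set c := cnt t N with hcdef
    have hν : c - 1 < N.card := by omega
    have hv := h (c - 1) hν
    have h1 : t ≤ (N.sort (· ≤ ·)).getD (N.card - 1 - (c - 1)) 0 :=
      (finset_getD_le_iff N (by omega) t).2 (by omega)
    have h3 : M.card - (M.card - 1 - (c - 1))
        ≤ cnt ((M.sort (· ≤ ·)).getD (M.card - 1 - (c - 1)) 0) M :=
      (finset_getD_le_iff M (by omega) _).1 le_rfl
    have h4 : cnt ((M.sort (· ≤ ·)).getD (M.card - 1 - (c - 1)) 0) M ≤ cnt t M :=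
      cnt_mono (le_trans h1 hv) M
    omega

/-- Edge of type (M1) between Maya diagrams (subsets of the interval `J = [p,q]`):
`M → N` if there exists `j` with `j ∈ N`, `j+1 ∈ M` and `M ∖ {j+1} = N ∖ {j}`. -/
def mayaM1 (p q : ℕ) (M N : Finset ℕ) : Prop :=
  M ⊆ Finset.Icc p q ∧ N ⊆ Finset.Icc p q ∧
    ∃ j, j ∈ N ∧ j + 1 ∈ M ∧ M.erase (j + 1) = N.erase j

/-- Edge of type (M4) (quantum edge, `1, 2 ∈ J = [1,q]`):
`M → N` if `1, 2 ∈ M` and `N = M ∖ {1, 2}`. -/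
def mayaM4 (q : ℕ) (M N : Finset ℕ) : Prop :=
  M ⊆ Finset.Icc 1 q ∧ N ⊆ Finset.Icc 1 q ∧
    1 ∈ M ∧ 2 ∈ M ∧ N = (M.erase 1).erase 2

/-! ### Effect of single edges on the counting statistics -/

lemma mayaM1_step {q : ℕ} {A B : Finset ℕ} (h : mayaM1 1 q A B) :
    B.card = A.card ∧ ∀ t, cnt t B ≤ cnt t A := by
  obtain ⟨hA, hB, j, hjB, hjA, heq⟩ := h
  have hjnA : j ∉ A.erase (j+1) := by
    rw [heq]; exact Finset.notMem_erase j B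
  have hBeq : B = insert j (A.erase (j+1)) := by
    rw [heq]
    exact (Finset.insert_erase hjB).symm
  constructor
  · rw [hBeq, Finset.card_insert_of_notMem hjnA, Finset.card_erase_of_mem hjA]
    have : 1 ≤ A.card := Finset.card_pos.2 ⟨j+1, hjA⟩
    omega
  · intro t
    rw [hBeq, cnt_insert hjnA, cnt_erase hjA]
    have h1 : t ≤ j + 1 → 1 ≤ cnt t A := fun ht => one_le_cnt hjA ht
    by_cases h2 : t ≤ j <;> by_cases h3 : t ≤ j + 1 <;> simp [h2, h3] <;> omega

lemma mayaM4_step {q : ℕ} {A B : Finset ℕ} (h : mayaM4 q A B) :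
    A.card = B.card + 2 ∧ ∀ t, cnt t B ≤ cnt t A := by
  obtain ⟨hA, hB, h1, h2, heq⟩ := h
  have h2' : 2 ∈ A.erase 1 := Finset.mem_erase.2 ⟨by omega, h2⟩
  constructor
  · rw [heq, Finset.card_erase_of_mem h2', Finset.card_erase_of_mem h1]
    have : 2 ≤ A.card := by
      have hsub : ({1, 2} : Finset ℕ) ⊆ A := by
        intro x hx; simp at hx; rcases hx with h | h <;> simp [h, h1, h2]
      calc 2 = ({1, 2} : Finset ℕ).card := by decide
        _ ≤ A.card := Finset.card_le_card hsub
    omega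
  · intro t
    rw [heq, cnt_erase h2', cnt_erase h1]
    omega

/-! ### Forward directions -/

lemma fwd_general {q : ℕ} {M N : Finset ℕ}
    (h : Relation.ReflTransGen (fun M N => mayaM1 1 q M N ∨ mayaM4 q M N) M N) :
    (∃ k, M.card = N.card + 2 * k) ∧ ∀ t, cnt t N ≤ cnt t M := by
  induction h with
  | refl => exact ⟨⟨0, by omega⟩, fun t => le_rfl⟩
  | tail _hab hedge ih =>
    obtain ⟨⟨k, hk⟩, hdom⟩ := ih
    rcases hedge with h1 | h4
    · obtain ⟨hcard, hd⟩ := mayaM1_step h1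
      exact ⟨⟨k, by omega⟩, fun t => le_trans (hd t) (hdom t)⟩
    · obtain ⟨hcard, hd⟩ := mayaM4_step h4
      exact ⟨⟨k + 1, by omega⟩, fun t => le_trans (hd t) (hdom t)⟩

lemma fwd_M1 {q : ℕ} {M N : Finset ℕ}
    (h : Relation.ReflTransGen (mayaM1 1 q) M N) :
    M.card = N.card ∧ ∀ t, cnt t N ≤ cnt t M := by
  induction h with
  | refl => exact ⟨rfl, fun t => le_rfl⟩
  | tail _hab hedge ih =>
    obtain ⟨hcard, hdom⟩ := ih
    obtain ⟨hc, hd⟩ := mayaM1_step hedge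
    exact ⟨by omega, fun t => le_trans (hd t) (hdom t)⟩

/-! ### Backward direction: building paths -/

lemma back_b (q : ℕ) : ∀ m, ∀ M N : Finset ℕ, (∑ x ∈ M, x) < m →
    M ⊆ Finset.Icc 1 q → N ⊆ Finset.Icc 1 q → M.card = N.card →
    (∀ t, cnt t N ≤ cnt t M) → Relation.ReflTransGen (mayaM1 1 q) M N := by
  intro m
  induction m using Nat.strong_induction_on with
  | _ m IH =>
  intro M N hsum hM hN hcard hdom
  by_cases hT : ((Finset.range (q+1)).filter (fun t => cnt t N < cnt t M)) = ∅
  · -- all counts are equal, hence M = N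
    have hforall : ∀ t, cnt t M = cnt t N := by
      intro t
      by_cases ht : t ≤ q
      · have hnot : t ∉ (Finset.range (q+1)).filter (fun t => cnt t N < cnt t M) := by
          rw [hT]; exact Finset.notMem_empty t
        rw [Finset.mem_filter, Finset.mem_range] at hnot
        push_neg at hnot
        have := hnot (by omega)
        have := hdom t
        omega
      · rw [cnt_eq_zero_of_subset hM (by omega), cnt_eq_zero_of_subset hN (by omega)]
    have hMN : M = N := by
      ext x
      rw [mem_iff_cnt, mem_iff_cnt, hforall x, hforall (x+1)]
    rw [hMN]
  · have hne : ((Finset.range (q+1)).filter (fun t => cnt t N < cnt t M)).Nonempty :=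
      Finset.nonempty_of_ne_empty hT
    set T := (Finset.range (q+1)).filter (fun t => cnt t N < cnt t M) with hTdef
    set b := T.min' hne with hbdef
    have hbT : b ∈ T := T.min'_mem hne
    rw [hTdef, Finset.mem_filter, Finset.mem_range] at hbT
    have hb_strict : cnt b N < cnt b M := hbT.2
    have hbq : b ≤ q := by omega
    have hcnt0 : cnt 0 N = cnt 0 M := by rw [cnt_zero, cnt_zero, hcard]
    have hcnt1 : cnt 1 N = cnt 1 M := by
      rw [cnt_one_of_subset hM, cnt_one_of_subset hN, hcard]
    have hb2 : 2 ≤ b := by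
      rcases Nat.lt_or_ge b 2 with h | h
      · interval_cases b <;> omega
      · exact h
    have hnotT : b - 1 ∉ T := by
      intro hmem
      have := T.min'_le _ hmem
      omega
    have hbm1 : cnt (b-1) M = cnt (b-1) N := by
      rw [hTdef, Finset.mem_filter, Finset.mem_range] at hnotT
      push_neg at hnotT
      have h1 := hnotT (by omega)
      have h2 := hdom (b-1)
      omega
    have hbM : b - 1 ∉ M := by
      intro hmem
      have e1 := cnt_succ (b-1) M
      rw [if_pos hmem, show b - 1 + 1 = b by omega] at e1
      have e2 := cnt_succ (b-1) N
      rw [show b - 1 + 1 = b by omega] at e2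
      split at e2 <;> omega
    have hfil : (M.filter (fun x => b ≤ x)).Nonempty := by
      rw [← Finset.card_pos]
      show 0 < cnt b M
      omega
    set a := (M.filter (fun x => b ≤ x)).min' hfil with hadef
    have haMb : a ∈ M ∧ b ≤ a := by
      have := (M.filter (fun x => b ≤ x)).min'_mem hfil
      rwa [Finset.mem_filter] at this
    have ha_min : ∀ x ∈ M, b ≤ x → a ≤ x := fun x hx hbx =>
      Finset.min'_le _ x (Finset.mem_filter.2 ⟨hx, hbx⟩)
    have haq : a ≤ q := (Finset.mem_Icc.1 (hM haMb.1)).2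
    have ha2 : 2 ≤ a := le_trans hb2 haMb.2
    have ham1 : a - 1 ∉ M := by
      intro hmem
      by_cases hge : b ≤ a - 1
      · have := ha_min _ hmem hge; omega
      · have heq : a - 1 = b - 1 := by omega
        rw [heq] at hmem
        exact hbM hmem
    have hcnt_ab : cnt a M = cnt b M := by
      refine le_antisymm (cnt_mono haMb.2 M) ?_
      apply Finset.card_le_card
      intro x hx
      rw [Finset.mem_filter] at hx ⊢
      exact ⟨hx.1, ha_min x hx.1 hx.2⟩
    have hstrict : cnt a N < cnt a M :=
      lt_of_le_of_lt (cnt_mono haMb.2 N) (by omega)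
    set N' := insert (a-1) (M.erase a) with hN'def
    have hnotmem : a - 1 ∉ M.erase a := fun h => ham1 (Finset.mem_of_mem_erase h)
    have hN'sub : N' ⊆ Finset.Icc 1 q := by
      rw [hN'def]
      apply Finset.insert_subset (Finset.mem_Icc.2 ⟨by omega, by omega⟩)
      exact (Finset.erase_subset _ _).trans hM
    have hedge : mayaM1 1 q M N' := by
      refine ⟨hM, hN'sub, a - 1, Finset.mem_insert_self _ _, ?_, ?_⟩
      · rw [show a - 1 + 1 = a by omega]; exact haMb.1
      · rw [show a - 1 + 1 = a by omega, hN'def, Finset.erase_insert hnotmem]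
    have hcard' : N'.card = M.card := by
      rw [hN'def, Finset.card_insert_of_notMem hnotmem, Finset.card_erase_of_mem haMb.1]
      have : 1 ≤ M.card := Finset.card_pos.2 ⟨a, haMb.1⟩
      omega
    have hdom' : ∀ t, cnt t N ≤ cnt t N' := by
      intro t
      have e1 : cnt t N' = cnt t M - (if t ≤ a then 1 else 0) + (if t ≤ a - 1 then 1 else 0) := by
        rw [hN'def, cnt_insert hnotmem, cnt_erase haMb.1]
      rcases lt_trichotomy t a with h | h | h
      · rw [if_pos (by omega), if_pos (by omega)] at e1
        have := one_le_cnt haMb.1 (le_of_lt h)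
        have := hdom t
        omega
      · subst h
        rw [if_pos le_rfl, if_neg (by omega)] at e1
        omega
      · rw [if_neg (by omega), if_neg (by omega)] at e1
        have := hdom t
        omega
    have hsum' : ∑ x ∈ N', x < ∑ x ∈ M, x := by
      rw [hN'def, Finset.sum_insert hnotmem]
      have h : a + ∑ x ∈ M.erase a, x = ∑ x ∈ M, x :=
        Finset.add_sum_erase M (fun x => x) haMb.1
      omega
    exact Relation.ReflTransGen.head hedge
      (IH (∑ x ∈ M, x) hsum N' N hsum' hN'sub hN (hcard'.trans hcard) hdom')

lemma back_a (q : ℕ) : ∀ m, ∀ M N : Finset ℕ, (∑ x ∈ M, x) < m →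
    M ⊆ Finset.Icc 1 q → N ⊆ Finset.Icc 1 q → (∃ k, M.card = N.card + 2 * k) →
    (∀ t, cnt t N ≤ cnt t M) →
    Relation.ReflTransGen (fun M N => mayaM1 1 q M N ∨ mayaM4 q M N) M N := by
  intro m
  induction m using Nat.strong_induction_on with
  | _ m IH =>
  intro M N hsum hM hN hex hdom
  obtain ⟨k, hk⟩ := hex
  by_cases hc : M.card = N.card
  · exact Relation.ReflTransGen.mono (fun a b h => Or.inl h) M N
      (back_b q (∑ x ∈ M, x + 1) M N (by omega) hM hN hc hdom)
  · have hk1 : 1 ≤ k := by omega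
    have hcard2 : N.card + 2 ≤ M.card := by omega
    by_cases h12 : 1 ∈ M ∧ 2 ∈ M
    · set M'' := (M.erase 1).erase 2 with hM''def
      have h2' : 2 ∈ M.erase 1 := Finset.mem_erase.2 ⟨by omega, h12.2⟩
      have hM''sub : M'' ⊆ Finset.Icc 1 q :=
        (Finset.erase_subset _ _).trans ((Finset.erase_subset _ _).trans hM)
      have hedge : mayaM4 q M M'' := ⟨hM, hM''sub, h12.1, h12.2, rfl⟩
      have hcard'' : M''.card = M.card - 2 := by
        rw [hM''def, Finset.card_erase_of_mem h2', Finset.card_erase_of_mem h12.1]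
        omega
      have hge3 : ∀ x ∈ M'', 3 ≤ x := by
        intro x hx
        rw [hM''def, Finset.mem_erase, Finset.mem_erase] at hx
        have := Finset.mem_Icc.1 (hM hx.2.2)
        omega
      have hdom'' : ∀ t, cnt t N ≤ cnt t M'' := by
        intro t
        by_cases ht : t ≤ 3
        · rw [cnt_eq_card_of_forall (fun x hx => le_trans ht (hge3 x hx))]
          have := cnt_le_card t N
          omega
        · have e : cnt t M'' = cnt t M := by
            rw [hM''def, cnt_erase h2', cnt_erase h12.1, if_neg (by omega), if_neg (by omega)]
            omega
          rw [e]; exact hdom t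
      have hsum'' : ∑ x ∈ M'', x < ∑ x ∈ M, x := by
        have h1 : (1:ℕ) + ∑ x ∈ M.erase 1, x = ∑ x ∈ M, x :=
          Finset.add_sum_erase M (fun x => x) h12.1
        have h2 : (2:ℕ) + ∑ x ∈ M'', x = ∑ x ∈ M.erase 1, x :=
          Finset.add_sum_erase (M.erase 1) (fun x => x) h2'
        omega
      exact Relation.ReflTransGen.head (Or.inr hedge)
        (IH (∑ x ∈ M, x) hsum M'' N hsum'' hM''sub hN ⟨k - 1, by omega⟩ hdom'')
    · have hcardM : 2 ≤ M.card := by omega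
      have hne : (M.erase 1).Nonempty := by
        rw [← Finset.card_pos]
        have := Finset.pred_card_le_card_erase (s := M) (a := 1)
        omega
      set a := (M.erase 1).min' hne with hadef
      have haM' : a ∈ M.erase 1 := (M.erase 1).min'_mem hne
      have haM : a ∈ M := Finset.mem_of_mem_erase haM'
      have ha1 : a ≠ 1 := (Finset.mem_erase.1 haM').1
      have haIcc := Finset.mem_Icc.1 (hM haM)
      have ha2 : 2 ≤ a := by omega
      have ha_min : ∀ x ∈ M, x ≠ 1 → a ≤ x := fun x hx h1 =>
        Finset.min'_le _ x (Finset.mem_erase.2 ⟨h1, hx⟩)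
      have ham1 : a - 1 ∉ M := by
        intro hmem
        by_cases h1 : a - 1 = 1
        · exact h12 ⟨by rwa [h1] at hmem, by rwa [show a = 2 by omega] at haM⟩
        · have := ha_min _ hmem h1; omega
      have hcnta : M.card - 1 ≤ cnt a M := by
        have hsub : M.erase 1 ⊆ M.filter (fun x => a ≤ x) := by
          intro x hx
          exact Finset.mem_filter.2 ⟨Finset.mem_of_mem_erase hx, Finset.min'_le _ x hx⟩
        have h1 := Finset.card_le_card hsub
        have h2 := Finset.pred_card_le_card_erase (s := M) (a := 1)
        exact le_trans h2 h1
      have hstrict : cnt a N < cnt a M := by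
        have := cnt_le_card a N
        omega
      set N' := insert (a-1) (M.erase a) with hN'def
      have hnotmem : a - 1 ∉ M.erase a := fun h => ham1 (Finset.mem_of_mem_erase h)
      have hN'sub : N' ⊆ Finset.Icc 1 q := by
        rw [hN'def]
        apply Finset.insert_subset (Finset.mem_Icc.2 ⟨by omega, by omega⟩)
        exact (Finset.erase_subset _ _).trans hM
      have hedge : mayaM1 1 q M N' := by
        refine ⟨hM, hN'sub, a - 1, Finset.mem_insert_self _ _, ?_, ?_⟩
        · rw [show a - 1 + 1 = a by omega]; exact haM
        · rw [show a - 1 + 1 = a by omega, hN'def, Finset.erase_insert hnotmem]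
      have hcard' : N'.card = M.card := by
        rw [hN'def, Finset.card_insert_of_notMem hnotmem, Finset.card_erase_of_mem haM]
        omega
      have hdom' : ∀ t, cnt t N ≤ cnt t N' := by
        intro t
        have e1 : cnt t N' = cnt t M - (if t ≤ a then 1 else 0) + (if t ≤ a - 1 then 1 else 0) := by
          rw [hN'def, cnt_insert hnotmem, cnt_erase haM]
        rcases lt_trichotomy t a with h | h | h
        · rw [if_pos (by omega), if_pos (by omega)] at e1
          have := one_le_cnt haM (le_of_lt h)
          have := hdom t
          omega
        · subst h
          rw [if_pos le_rfl, if_neg (by omega)] at e1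
          omega
        · rw [if_neg (by omega), if_neg (by omega)] at e1
          have := hdom t
          omega
      have hsum' : ∑ x ∈ N', x < ∑ x ∈ M, x := by
        rw [hN'def, Finset.sum_insert hnotmem]
        have h : a + ∑ x ∈ M.erase a, x = ∑ x ∈ M, x :=
          Finset.add_sum_erase M (fun x => x) haM
        omega
      exact Relation.ReflTransGen.head (Or.inl hedge)
        (IH (∑ x ∈ M, x) hsum N' N hsum' hN'sub hN ⟨k, by omega⟩ hdom')

/-- For the directed graph on subsets of the interval `J = [1,q] ⊆ [n]`
(containing `1` and `2` but not `n`) with edges of types (M1) and (M4), and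
`M = {m_1 < ⋯ < m_r}`, `N = {n_1 < ⋯ < n_s}`:
(a) there is a directed path from `M` to `N` if and only if `r − s` is a nonnegative even
integer and `m_{r−ν} ≥ n_{s−ν}` for all `0 ≤ ν ≤ s−1`; and
(b) there is a directed path using only edges of type (M1) if and only if `r = s` and
`m_ν ≥ n_ν` for all `ν ∈ [r]`. -/
theorem maya_reachability_quantum (n q : ℕ) (hq1 : 2 ≤ q) (hq2 : q < n)
    (M N : Finset ℕ) (hM : M ⊆ Finset.Icc 1 q) (hN : N ⊆ Finset.Icc 1 q) :
    (Relation.ReflTransGen (fun M N => mayaM1 1 q M N ∨ mayaM4 q M N) M N ↔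
      ((∃ k : ℕ, M.card = N.card + 2 * k) ∧
        ∀ ν < N.card,
          (N.sort (· ≤ ·)).getD (N.card - 1 - ν) 0 ≤
            (M.sort (· ≤ ·)).getD (M.card - 1 - ν) 0)) ∧
    (Relation.ReflTransGen (mayaM1 1 q) M N ↔
      (M.card = N.card ∧
        ∀ k < M.card, (N.sort (· ≤ ·)).getD k 0 ≤ (M.sort (· ≤ ·)).getD k 0)) := by
  constructor
  · constructor
    · intro h
      obtain ⟨⟨k, hk⟩, hdom⟩ := fwd_general h
      exact ⟨⟨k, hk⟩, (dom_iff (by omega)).1 hdom⟩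
    · rintro ⟨⟨k, hk⟩, hcond⟩
      exact back_a q (∑ x ∈ M, x + 1) M N (by omega) hM hN ⟨k, hk⟩
        ((dom_iff (by omega)).2 hcond)
  · constructor
    · intro h
      obtain ⟨hcard, hdom⟩ := fwd_M1 h
      refine ⟨hcard, fun k hkM => ?_⟩
      have hh := (dom_iff (le_of_eq hcard.symm)).1 hdom (M.card - 1 - k) (by omega)
      rwa [show N.card - 1 - (M.card - 1 - k) = k by omega,
        show M.card - 1 - (M.card - 1 - k) = k by omega] at hh
    · rintro ⟨hcard, hcond⟩
      apply back_b q (∑ x ∈ M, x + 1) M N (by omega) hM hN hcard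
      apply (dom_iff (le_of_eq hcard.symm)).2
      intro ν hν
      rw [show M.card - 1 - ν = N.card - 1 - ν by omega]
      exact hcond (N.card - 1 - ν) (by omega)
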